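/- For every natural number m ≥ 0, ∑_{k=0}^{m} C(m,k) · (B_{2m−k+1}/(2m−k+1)) · 2^k = ((−1)^m/2) · ( 1 − 2^{2m+1} · Γ(1+m)² / Γ(2m+2) ), where Γ is the Gamma function; equivalently the right-hand side equals ((−1)^m/2) · ( 1 − 2^{2m+1} · (m!)² / (2m+1)! ). -/

import Mathlib

open Finset Nat

lemma prodAux (m : ℕ) : ∀ n : ℕ, m ! * ∏ i ∈ Finset.range n, (m + 1 + i) = (m + n)! := by
  intro n
  induction n with
  | zero => simp
  | succ n ih =>
    rw [Finset.prod_range_succ, ← mul_assoc, ih]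
    rw [show m + (n+1) = (m + n) + 1 by omega, Nat.factorial_succ]
    ring

lemma sumAux : ∀ n : ℕ, ∀ x : ℚ, (∀ i : ℕ, i ≤ n → x + i ≠ 0) →
    ∑ k ∈ Finset.range (n+1), (-1 : ℚ)^k * n.choose k / (x + k)
      = n ! / ∏ i ∈ Finset.range (n+1), (x + i) := by
  intro n
  induction n with
  | zero => intro x hx; simp [Nat.factorial]
  | succ n ih =>
    intro x hx
    have hx' : ∀ i : ℕ, i ≤ n → (x+1) + (i:ℚ) ≠ 0 := by
      intro i hi h
      exact hx (i+1) (by omega) (by push_cast; linarith)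
    have key : ∑ k ∈ Finset.range (n+2), (-1 : ℚ)^k * (n+1).choose k / (x + k)
        = (∑ k ∈ Finset.range (n+1), (-1 : ℚ)^k * n.choose k / (x + k))
          - ∑ k ∈ Finset.range (n+1), (-1 : ℚ)^k * n.choose k / ((x+1) + k) := by
      rw [Finset.sum_range_succ' (fun k => (-1 : ℚ)^k * (n+1).choose k / (x + k)) (n+1)]
      have hsplit : ∀ k ∈ Finset.range (n+1),
          (-1 : ℚ)^(k+1) * ((n+1).choose (k+1) : ℚ) / (x + ((k : ℚ)+1))
            = (-1 : ℚ)^(k+1) * (n.choose (k+1) : ℚ) / (x + ((k : ℚ)+1))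
              - (-1 : ℚ)^k * (n.choose k : ℚ) / ((x+1) + k) := by
        intro k hk
        rw [Nat.choose_succ_succ]
        push_cast
        have h1 : x + ((k : ℚ) + 1) = (x + 1) + (k : ℚ) := by ring
        rw [h1]; ring
      push_cast
      rw [Finset.sum_congr rfl hsplit, Finset.sum_sub_distrib]
      have h2 : (∑ k ∈ Finset.range (n+1), (-1 : ℚ)^(k+1) * (n.choose (k+1) : ℚ) / (x + ((k:ℚ)+1)))
            + (-1:ℚ)^0 * ((n : ℕ).choose 0 : ℚ) / (x + (0:ℕ))
          = ∑ k ∈ Finset.range (n+2), (-1 : ℚ)^k * (n.choose k : ℚ) / (x + k) := by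
        rw [Finset.sum_range_succ' (fun k => (-1 : ℚ)^k * (n.choose k : ℚ) / (x + k)) (n+1)]
        push_cast
        norm_num
      simp only [pow_zero, Nat.choose_zero_right, Nat.cast_one, one_mul, Nat.cast_zero,
        add_zero, Nat.cast_ofNat] at h2 ⊢
      rw [sub_add_eq_add_sub, h2, Finset.sum_range_succ]
      simp [Nat.choose_succ_self]
    rw [key, ih x (fun i hi => hx i (by omega)), ih (x+1) hx']
    have hrel : (∏ i ∈ Finset.range (n+2), (x + (i:ℚ)))
        = (∏ i ∈ Finset.range (n+1), (x + (i:ℚ))) * (x + ((n:ℚ)+1)) := by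
      rw [Finset.prod_range_succ]; push_cast; ring
    have hrel2 : (∏ i ∈ Finset.range (n+2), (x + (i:ℚ)))
        = x * ∏ i ∈ Finset.range (n+1), ((x+1) + (i:ℚ)) := by
      rw [Finset.prod_range_succ' (fun i => x + (i:ℚ)) (n+1)]
      rw [Finset.prod_congr rfl
        (fun i _ => by push_cast; ring : ∀ i ∈ Finset.range (n+1), x + ((i+1 : ℕ):ℚ) = (x+1) + (i:ℚ))]
      push_cast; ring
    have hQne : (∏ i ∈ Finset.range (n+1), (x + (i:ℚ))) ≠ 0 :=
      Finset.prod_ne_zero_iff.mpr (fun i hi => hx i (by have := Finset.mem_range.mp hi; omega))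
    have hPne : (∏ i ∈ Finset.range (n+1), ((x+1) + (i:ℚ))) ≠ 0 :=
      Finset.prod_ne_zero_iff.mpr (fun i hi => hx' i (by have := Finset.mem_range.mp hi; omega))
    have hRne : (∏ i ∈ Finset.range (n+2), (x + (i:ℚ))) ≠ 0 := by
      rw [hrel]
      exact mul_ne_zero hQne (by have := hx (n+1) le_rfl; push_cast at this; exact this)
    have hfact : ((n+1)! : ℚ) = ((n:ℚ)+1) * (n ! : ℚ) := by
      rw [Nat.factorial_succ]; push_cast; ring
    rw [div_sub_div _ _ hQne hPne, div_eq_div_iff (mul_ne_zero hQne hPne) hRne, hfact, hrel]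
    have h3 : (∏ i ∈ Finset.range (n+1), (x + (i:ℚ))) * (x + ((n:ℚ)+1))
        = x * ∏ i ∈ Finset.range (n+1), ((x+1) + (i:ℚ)) := by rw [← hrel, hrel2]
    linear_combination (-(n ! : ℚ) * (∏ i ∈ Finset.range (n+1), (x + (i:ℚ)))) * h3

lemma sumId (m : ℕ) :
    ∑ k ∈ Finset.range (m+1), (-1:ℚ)^k * m.choose k / ((2*m+1-k : ℕ) : ℚ)
      = (-1)^m * (m ! : ℚ)^2 / ((2*m+1)! : ℚ) := by
  have hrefl := Finset.sum_range_reflect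
    (fun k => (-1:ℚ)^k * m.choose k / ((2*m+1-k : ℕ) : ℚ)) (m+1)
  rw [← hrefl]
  have hterm : ∀ j ∈ Finset.range (m+1),
      (-1:ℚ)^(m+1-1-j) * (m.choose (m+1-1-j) : ℚ) / ((2*m+1-(m+1-1-j) : ℕ) : ℚ)
        = (-1)^m * ((-1:ℚ)^j * (m.choose j : ℚ) / (((m:ℚ)+1) + j)) := by
    intro j hj
    have hj' : j ≤ m := by have := Finset.mem_range.mp hj; omega
    have h1 : m+1-1-j = m-j := by omega
    have h2 : (2*m+1-(m-j) : ℕ) = m+1+j := by omega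
    have h3 : m.choose (m-j) = m.choose j := Nat.choose_symm hj'
    have h4 : (-1:ℚ)^(m-j) = (-1)^m * (-1)^j := by
      conv_rhs => rw [show m = (m-j)+j by omega]
      rw [pow_add, mul_assoc, ← pow_add, ← two_mul, pow_mul]
      norm_num
    rw [h1, h2, h3, h4]
    push_cast
    ring
  rw [Finset.sum_congr rfl hterm, ← Finset.mul_sum,
    sumAux m ((m:ℚ)+1) (fun i hi => by positivity)]
  have hprod : (∏ i ∈ Finset.range (m+1), (((m:ℚ)+1) + i)) * (m ! : ℚ) = ((2*m+1)! : ℚ) := by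
    have := prodAux m (m+1)
    have hc : ((m ! * ∏ i ∈ Finset.range (m+1), (m+1+i) : ℕ) : ℚ) = (((m + (m+1))! : ℕ) : ℚ) := by
      exact_mod_cast congrArg (Nat.cast : ℕ → ℚ) this
    push_cast at hc
    rw [show m + (m+1) = 2*m+1 by omega] at hc
    rw [← hc]
    exact mul_comm _ _
  have hprodne : (∏ i ∈ Finset.range (m+1), (((m:ℚ)+1) + i)) ≠ 0 :=
    Finset.prod_ne_zero_iff.mpr (fun i _ => by positivity)
  have hfactne : (m ! : ℚ) ≠ 0 := by positivity
  rw [mul_div_assoc' ((-1:ℚ)^m), div_eq_div_iff hprodne (by positivity : ((2*m+1)! : ℚ) ≠ 0)]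
  linear_combination (-(-1:ℚ)^m * (m ! : ℚ)) * hprod

noncomputable def Gp (m : ℕ) : Polynomial ℚ :=
  ∑ k ∈ Finset.range (m+1),
    Polynomial.C ((m.choose k : ℚ) * 2^k / ((2*m+1-k : ℕ) : ℚ)) *
      Polynomial.bernoulli (2*m+1-k)

noncomputable def Ap (m : ℕ) : Polynomial ℚ :=
  ∑ k ∈ Finset.range (m+1),
    Polynomial.C ((m.choose k : ℚ) * 2^k / (((2*m+1-k : ℕ):ℚ) * ((2*m+2-k : ℕ) : ℚ))) *
      Polynomial.bernoulli (2*m+2-k)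

lemma GDiff (m : ℕ) (x : ℚ) : (Gp m).eval (1+x) = (Gp m).eval x + x^m * (x+2)^m := by
  unfold Gp
  rw [Polynomial.eval_finset_sum, Polynomial.eval_finset_sum]
  have h1 : ∀ k ∈ Finset.range (m+1),
      (Polynomial.C ((m.choose k : ℚ) * 2^k / ((2*m+1-k : ℕ) : ℚ)) *
        Polynomial.bernoulli (2*m+1-k)).eval (1+x)
      = (Polynomial.C ((m.choose k : ℚ) * 2^k / ((2*m+1-k : ℕ) : ℚ)) *
          Polynomial.bernoulli (2*m+1-k)).eval x
        + (m.choose k : ℚ) * 2^k * x^(2*m-k) := by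
    intro k hk
    have hk' : k ≤ m := by have := Finset.mem_range.mp hk; omega
    have hne : ((2*m+1-k : ℕ) : ℚ) ≠ 0 := Nat.cast_ne_zero.mpr (by omega)
    rw [Polynomial.eval_mul, Polynomial.eval_mul, Polynomial.eval_C, Polynomial.eval_C,
      Polynomial.bernoulli_eval_one_add, show (2*m+1-k) - 1 = 2*m-k by omega, mul_add]
    congr 1
    field_simp
  rw [Finset.sum_congr rfl h1, Finset.sum_add_distrib]
  congr 1
  rw [show (x+2)^m = (2+x)^m by ring, add_pow, Finset.mul_sum]
  apply Finset.sum_congr rfl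
  intro k hk
  have hk' : k ≤ m := by have := Finset.mem_range.mp hk; omega
  rw [show 2*m - k = m + (m - k) by omega, pow_add]
  ring

lemma ADeriv (m : ℕ) : Polynomial.derivative (Ap m) = Gp m := by
  unfold Ap Gp
  rw [map_sum]
  apply Finset.sum_congr rfl
  intro k hk
  have hk' : k ≤ m := by have := Finset.mem_range.mp hk; omega
  have hne : ((2*m+1-k : ℕ) : ℚ) ≠ 0 := Nat.cast_ne_zero.mpr (by omega)
  have hne2 : ((2*m+1-k : ℕ) : ℚ) + 1 ≠ 0 := by positivity
  rw [Polynomial.derivative_mul, Polynomial.derivative_C, zero_mul, zero_add,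
    show 2*m+2-k = (2*m+1-k)+1 by omega, Polynomial.derivative_bernoulli_add_one]
  rw [← mul_assoc]
  congr 1
  have hC : ((2*m+1-k : ℕ) : Polynomial ℚ) + 1 = Polynomial.C (((2*m+1-k : ℕ) : ℚ) + 1) := by
    simp
  rw [hC, ← Polynomial.C_mul]
  congr 1
  have hcast : (((2*m+1-k)+1 : ℕ) : ℚ) = ((2*m+1-k : ℕ) : ℚ) + 1 := by push_cast; ring
  rw [hcast]
  field_simp

lemma AZeroOne (m : ℕ) : (Ap m).eval 1 = (Ap m).eval 0 := by
  unfold Ap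
  rw [Polynomial.eval_finset_sum, Polynomial.eval_finset_sum]
  apply Finset.sum_congr rfl
  intro k hk
  have hk' : k ≤ m := by have := Finset.mem_range.mp hk; omega
  have hb := Polynomial.bernoulli_eval_one_add (2*m+2-k) (0:ℚ)
  rw [add_zero] at hb
  rw [Polynomial.eval_mul, Polynomial.eval_mul, Polynomial.eval_C, Polynomial.eval_C, hb,
    zero_pow (by omega : 2*m+2-k-1 ≠ 0)]
  ring

lemma ANeg (m : ℕ) : (Ap m).eval (-1) - (Ap m).eval (-2)
    = -(2:ℚ)^(2*m+1) * ∑ k ∈ Finset.range (m+1),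
        (-1:ℚ)^k * m.choose k / ((2*m+1-k : ℕ) : ℚ) := by
  unfold Ap
  rw [Polynomial.eval_finset_sum, Polynomial.eval_finset_sum, ← Finset.sum_sub_distrib,
    Finset.mul_sum]
  apply Finset.sum_congr rfl
  intro k hk
  have hk' : k ≤ m := by have := Finset.mem_range.mp hk; omega
  have hn : ((2*m+1-k : ℕ):ℚ) ≠ 0 := Nat.cast_ne_zero.mpr (by omega)
  have hN : ((2*m+2-k : ℕ):ℚ) ≠ 0 := Nat.cast_ne_zero.mpr (by omega)
  have hb := Polynomial.bernoulli_eval_one_add (2*m+2-k) (-2:ℚ)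
  rw [show (1:ℚ) + (-2) = -1 by norm_num] at hb
  rw [Polynomial.eval_mul, Polynomial.eval_mul, Polynomial.eval_C, Polynomial.eval_C, hb,
    show (2*m+2-k) - 1 = 2*m+1-k by omega]
  have hsign : (-1:ℚ)^(2*m+1-k) = -(-1:ℚ)^k := by
    have h5 : (-1:ℚ)^(2*m+1-k) * (-1)^k = -1 := by
      rw [← pow_add, show 2*m+1-k+k = 2*m+1 by omega, pow_succ, pow_mul]
      norm_num
    have h6 : (-1:ℚ)^k * (-1)^k = 1 := by
      rw [← pow_add, ← two_mul, pow_mul]; norm_num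
    calc (-1:ℚ)^(2*m+1-k) = (-1)^(2*m+1-k) * ((-1)^k * (-1)^k) := by rw [h6, mul_one]
      _ = ((-1)^(2*m+1-k) * (-1)^k) * (-1)^k := by ring
      _ = -1 * (-1)^k := by rw [h5]
      _ = -(-1)^k := by ring
  have hexp : ((-2:ℚ))^(2*m+1-k) = -(-1:ℚ)^k * 2^(2*m+1-k) := by
    rw [show (-2:ℚ) = -1 * 2 by norm_num, mul_pow, hsign]; try ring
  have hpow2 : (2:ℚ)^k * 2^(2*m+1-k) = 2^(2*m+1) := by
    rw [← pow_add, show k + (2*m+1-k) = 2*m+1 by omega]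
  have hNn : ((2*m+2-k : ℕ):ℚ) = ((2*m+1-k : ℕ):ℚ) + 1 := by
    rw [show 2*m+2-k = (2*m+1-k)+1 by omega]; push_cast; ring
  rw [hexp]
  field_simp
  linear_combination (-((m.choose k : ℚ) * ((2*m+2-k : ℕ):ℚ) * (-1:ℚ)^k)) * hpow2

noncomputable def Kp (m : ℕ) : Polynomial ℚ :=
  Gp m + (Gp m).comp (Polynomial.C (-1) - Polynomial.X)

lemma Keval (m : ℕ) (x : ℚ) : (Kp m).eval x = (Gp m).eval x + (Gp m).eval (-1-x) := by
  unfold Kp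
  simp [Polynomial.eval_comp, sub_eq_add_neg]

lemma Kperiodic (m : ℕ) (x : ℚ) : (Kp m).eval (x+1) = (Kp m).eval x := by
  rw [Keval, Keval]
  have h1 := GDiff m x
  have h2 := GDiff m (-2-x)
  rw [show (1:ℚ)+(-2-x) = -1-x by ring] at h2
  rw [show x+(1:ℚ) = 1+x by ring, h1, show (-1:ℚ)-(1+x) = -2-x by ring, h2]
  have h3 : ((-2:ℚ)-x)^m * ((-2-x)+2)^m = x^m * (x+2)^m := by
    rw [show ((-2:ℚ)-x)+2 = -x by ring, show ((-2:ℚ)-x) = -(x+2) by ring, neg_pow, neg_pow x]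
    have hsq : (-1:ℚ)^m * (-1)^m = 1 := by rw [← pow_add, ← two_mul, pow_mul]; norm_num
    linear_combination ((x+2)^m * x^m) * hsq
  rw [h3]
  ring

lemma Kconst (m : ℕ) : Kp m = Polynomial.C ((Kp m).eval 0) := by
  have hnat : ∀ n : ℕ, (Kp m).eval (n:ℚ) = (Kp m).eval 0 := by
    intro n
    induction n with
    | zero => norm_num
    | succ n ih => push_cast; rw [Kperiodic]; exact_mod_cast ih
  have hzero : Kp m - Polynomial.C ((Kp m).eval 0) = 0 := by
    apply Polynomial.eq_zero_of_infinite_isRoot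
    apply Set.Infinite.mono (s := Set.range (Nat.cast : ℕ → ℚ))
    · rintro x ⟨n, rfl⟩
      simp only [Set.mem_setOf_eq, Polynomial.IsRoot, Polynomial.eval_sub, Polynomial.eval_C]
      rw [hnat n, sub_self]
    · exact Set.infinite_range_of_injective Nat.cast_injective
  exact sub_eq_zero.mp hzero

lemma Geval0 (m : ℕ) : (Gp m).eval 0
    = (-(2:ℚ)^(2*m+1) * ((-1)^m * (m ! : ℚ)^2 / ((2*m+1)! : ℚ)) + (-1)^m) / 2 := by
  set c := (Kp m).eval 0 with hc
  set q : Polynomial ℚ := Polynomial.C (-1) - Polynomial.X with hq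
  set W : Polynomial ℚ := Ap m - (Ap m).comp q with hW
  have hdW : Polynomial.derivative W = Kp m := by
    rw [hW, map_sub, Polynomial.derivative_comp, ADeriv, hq]
    rw [map_sub, Polynomial.derivative_C, Polynomial.derivative_X]
    unfold Kp
    rw [← hq]
    ring
  have hdW2 : Polynomial.derivative (W - Polynomial.C c * Polynomial.X) = 0 := by
    rw [map_sub, hdW, Kconst m, ← hc]
    simp
  have hWlin := Polynomial.eq_C_of_derivative_eq_zero hdW2
  have hWeval : W.eval 1 - W.eval 0 = c := by
    have e1 := congrArg (Polynomial.eval 1) hWlin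
    have e0 := congrArg (Polynomial.eval 0) hWlin
    simp only [Polynomial.eval_sub, Polynomial.eval_mul, Polynomial.eval_C, Polynomial.eval_X,
      mul_one, mul_zero, sub_zero] at e1 e0
    linarith
  have hq1 : q.eval 1 = -2 := by rw [hq]; simp; norm_num
  have hq0 : q.eval 0 = -1 := by rw [hq]; simp
  have hWe1 : W.eval 1 = (Ap m).eval 1 - (Ap m).eval (-2) := by
    rw [hW, Polynomial.eval_sub, Polynomial.eval_comp, hq1]
  have hWe0 : W.eval 0 = (Ap m).eval 0 - (Ap m).eval (-1) := by
    rw [hW, Polynomial.eval_sub, Polynomial.eval_comp, hq0]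
  have hcval : c = -(2:ℚ)^(2*m+1) * ((-1)^m * (m ! : ℚ)^2 / ((2*m+1)! : ℚ)) := by
    rw [← hWeval, hWe1, hWe0, AZeroOne m]
    have := ANeg m
    rw [sumId m] at this
    linarith
  have hK0 : c = (Gp m).eval 0 + (Gp m).eval (-1) := by
    rw [hc, Keval m 0]
    norm_num
  have hGd := GDiff m (-1)
  rw [show (1:ℚ) + (-1) = 0 by norm_num, show ((-1:ℚ)+2) = 1 by norm_num, one_pow, mul_one] at hGd
  have hneg : ((-1:ℚ))^m = (-1:ℚ)^m := rfl
  -- G.eval 0 = G.eval (-1) + (-1)^m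
  rw [hcval] at hK0
  have : (Gp m).eval 0 = (Gp m).eval (-1) + (-1)^m := by rw [hGd]
  linarith

theorem stmt_1 (m : ℕ) :
    ∑ k ∈ Finset.range (m + 1),
        (m.choose k : ℝ) * ((bernoulli (2 * m - k + 1) : ℝ) / (2 * m - k + 1)) * 2 ^ k
      = (-1) ^ m / 2 *
          (1 - 2 ^ (2 * m + 1) * Real.Gamma (1 + m) ^ 2 / Real.Gamma (2 * m + 2)) := by
  have hG := Geval0 m
  have hGsum : (Gp m).eval 0 = ∑ k ∈ Finset.range (m+1),
      (m.choose k : ℚ) * ((_root_.bernoulli (2*m+1-k) : ℚ) / ((2*m+1-k : ℕ) : ℚ)) * 2^k := by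
    unfold Gp
    rw [Polynomial.eval_finset_sum]
    apply Finset.sum_congr rfl
    intro k hk
    rw [Polynomial.eval_mul, Polynomial.eval_C, Polynomial.bernoulli_eval_zero]
    ring
  have hcast : (∑ k ∈ Finset.range (m + 1),
      (m.choose k : ℝ) * ((bernoulli (2 * m - k + 1) : ℝ) / (2 * m - k + 1)) * 2 ^ k)
      = (((Gp m).eval 0 : ℚ) : ℝ) := by
    rw [hGsum]
    push_cast
    apply Finset.sum_congr rfl
    intro k hk
    have hk' : k ≤ m := by have := Finset.mem_range.mp hk; omega
    have h1 : 2*m - k + 1 = 2*m+1-k := by omega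
    have h2 : ((2*m+1-k : ℕ) : ℝ) = 2*(m:ℝ) - k + 1 := by
      rw [Nat.cast_sub (by omega : k ≤ 2*m+1)]
      push_cast
      ring
    rw [h1, h2]
  rw [hcast, hG]
  rw [show (1:ℝ) + (m:ℝ) = (m:ℝ) + 1 by ring, Real.Gamma_nat_eq_factorial,
    show 2*(m:ℝ)+2 = ((2*m+1 : ℕ):ℝ)+1 by push_cast; ring, Real.Gamma_nat_eq_factorial]
  push_cast
  have hfac : (((2*m+1).factorial : ℕ) : ℝ) ≠ 0 := by positivity
  field_simp
  ring
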